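/- Let A be a symmetric negative definite n×n real matrix and B an n×m real matrix. Then sup_{ω ∈ ℝ} ‖B^T (jωI − A)^{-1} B‖₂ = ‖B^T (−A)^{-1} B‖₂; i.e., the H∞-norm of the state-space symmetric system G(s) = B^T(sI − A)^{-1}B is attained at frequency zero. -/

import Mathlib

open Matrix
open scoped Matrix.Norms.L2Operator

section Stmt10Aux
open scoped ComplexConjugate ComplexOrder MatrixOrder

variable {𝕜 : Type*} [RCLike 𝕜]

/-- Euclidean norm of a bare vector. -/
noncomputable def en {k : ℕ} (x : Fin k → 𝕜) : ℝ :=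
  ‖(WithLp.equiv 2 (Fin k → 𝕜)).symm x‖

lemma en_nonneg {k : ℕ} (x : Fin k → 𝕜) : 0 ≤ en x := norm_nonneg _

lemma en_eq {k : ℕ} (x : Fin k → 𝕜) : en x = Real.sqrt (∑ i, ‖x i‖ ^ 2) := by
  rw [en, EuclideanSpace.norm_eq]; rfl

lemma en_sq {k : ℕ} (x : Fin k → 𝕜) : en x ^ 2 = ∑ i, ‖x i‖ ^ 2 := by
  rw [en_eq, Real.sq_sqrt]; positivity

lemma en_mulVec_le {p q : ℕ} (M : Matrix (Fin p) (Fin q) 𝕜) (x : Fin q → 𝕜) :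
    en (M *ᵥ x) ≤ ‖M‖ * en x :=
  M.l2_opNorm_mulVec ((WithLp.equiv 2 (Fin q → 𝕜)).symm x)

lemma opNorm_le' {p q : ℕ} (M : Matrix (Fin p) (Fin q) 𝕜) {c : ℝ} (hc : 0 ≤ c)
    (h : ∀ x : Fin q → 𝕜, en (M *ᵥ x) ≤ c * en x) : ‖M‖ ≤ c := by
  rw [Matrix.l2_opNorm_def]
  refine ContinuousLinearMap.opNorm_le_bound _ hc fun x => ?_
  simpa [Matrix.toEuclideanLin_apply, en] using h ((WithLp.equiv 2 (Fin q → 𝕜)) x)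

lemma abs_dot_le {k : ℕ} (x w : Fin k → 𝕜) : ‖star x ⬝ᵥ w‖ ≤ en x * en w := by
  have h := norm_inner_le_norm (𝕜 := 𝕜) ((WithLp.equiv 2 (Fin k → 𝕜)).symm x)
      ((WithLp.equiv 2 (Fin k → 𝕜)).symm w)
  rw [EuclideanSpace.inner_eq_star_dotProduct, dotProduct_comm] at h
  exact h

lemma dot_triple {p q : ℕ} (C : Matrix (Fin p) (Fin q) ℂ) (d : Fin p → ℂ) (z w : Fin q → ℂ) :
    star z ⬝ᵥ ((Cᴴ * diagonal d * C) *ᵥ w)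
      = ∑ i, conj ((C *ᵥ z) i) * (d i * (C *ᵥ w) i) := by
  rw [← mulVec_mulVec, ← mulVec_mulVec, dotProduct_mulVec, ← star_mulVec]
  simp [dotProduct, mulVec_diagonal]

lemma quad_bound {p q : ℕ} (C : Matrix (Fin p) (Fin q) ℂ) (e : Fin p → ℝ) (z : Fin q → ℂ) :
    ∑ i, e i * ‖(C *ᵥ z) i‖ ^ 2
      ≤ ‖Cᴴ * diagonal (fun i => (e i : ℂ)) * C‖ * en z ^ 2 := by
  set H := Cᴴ * diagonal (fun i => (e i : ℂ)) * C with hH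
  have h1 : star z ⬝ᵥ (H *ᵥ z) = ((∑ i, e i * ‖(C *ᵥ z) i‖ ^ 2 : ℝ) : ℂ) := by
    rw [dot_triple]
    push_cast
    refine Finset.sum_congr rfl fun i _ => ?_
    rw [mul_comm ((e i : ℂ)) _, ← mul_assoc, Complex.conj_mul']
    ring
  have h2 : ‖star z ⬝ᵥ (H *ᵥ z)‖ ≤ en z * (‖H‖ * en z) := by
    refine (abs_dot_le z (H *ᵥ z)).trans ?_
    exact mul_le_mul_of_nonneg_left (en_mulVec_le H z) (en_nonneg z)
  calc ∑ i, e i * ‖(C *ᵥ z) i‖ ^ 2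
      ≤ ‖((∑ i, e i * ‖(C *ᵥ z) i‖ ^ 2 : ℝ) : ℂ)‖ := by
        rw [Complex.norm_real]; exact le_abs_self _
    _ = ‖star z ⬝ᵥ (H *ᵥ z)‖ := by rw [h1]
    _ ≤ en z * (‖H‖ * en z) := h2
    _ = ‖H‖ * en z ^ 2 := by ring

lemma key_le {p q : ℕ} (C : Matrix (Fin p) (Fin q) ℂ) (d : Fin p → ℂ) (e : Fin p → ℝ)
    (he : ∀ i, ‖d i‖ ≤ e i) :
    ‖Cᴴ * diagonal d * C‖ ≤ ‖Cᴴ * diagonal (fun i => (e i : ℂ)) * C‖ := by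
  set H := Cᴴ * diagonal (fun i => (e i : ℂ)) * C with hH
  have he0 : ∀ i, 0 ≤ e i := fun i => (norm_nonneg _).trans (he i)
  refine opNorm_le' _ (norm_nonneg H) fun y => ?_
  set x := (Cᴴ * diagonal d * C) *ᵥ y with hx
  set u := C *ᵥ x with hu
  set v := C *ᵥ y with hv
  have main : en x ^ 2 ≤ ‖H‖ * en x * en y := by
    have h1 : (en x ^ 2 : ℝ) ≤ ‖star x ⬝ᵥ x‖ := by
      have : star x ⬝ᵥ x = ((∑ i, ‖x i‖ ^ 2 : ℝ) : ℂ) := by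
        push_cast
        refine Finset.sum_congr rfl fun i _ => ?_
        rw [Pi.star_apply, Complex.star_def, Complex.conj_mul']
      rw [this, en_sq, Complex.norm_real]
      exact le_abs_self _
    have h2 : star x ⬝ᵥ x = ∑ i, conj (u i) * (d i * v i) := by
      rw [hx, dot_triple]
    have h3 : ‖∑ i, conj (u i) * (d i * v i)‖ ≤ ∑ i, e i * (‖u i‖ * ‖v i‖) := by
      refine (norm_sum_le _ _).trans (Finset.sum_le_sum fun i _ => ?_)
      rw [norm_mul, norm_mul, RCLike.norm_conj]
      calc ‖u i‖ * (‖d i‖ * ‖v i‖) ≤ ‖u i‖ * (e i * ‖v i‖) :=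
            mul_le_mul_of_nonneg_left
              (mul_le_mul_of_nonneg_right (he i) (norm_nonneg _)) (norm_nonneg _)
        _ = e i * (‖u i‖ * ‖v i‖) := by ring
    have h4 : ∑ i, e i * (‖u i‖ * ‖v i‖)
        ≤ Real.sqrt (∑ i, e i * ‖u i‖ ^ 2) * Real.sqrt (∑ i, e i * ‖v i‖ ^ 2) := by
      have hcs := Real.sum_mul_le_sqrt_mul_sqrt Finset.univ
        (fun i => Real.sqrt (e i) * ‖u i‖) (fun i => Real.sqrt (e i) * ‖v i‖)
      calc ∑ i, e i * (‖u i‖ * ‖v i‖)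
          = ∑ i, (Real.sqrt (e i) * ‖u i‖) * (Real.sqrt (e i) * ‖v i‖) := by
            refine Finset.sum_congr rfl fun i _ => ?_
            rw [show (Real.sqrt (e i) * ‖u i‖) * (Real.sqrt (e i) * ‖v i‖)
              = (Real.sqrt (e i) * Real.sqrt (e i)) * (‖u i‖ * ‖v i‖) by ring,
              Real.mul_self_sqrt (he0 i)]
        _ ≤ _ := hcs
        _ = _ := by
            congr 1 <;> congr 1 <;>
            · refine Finset.sum_congr rfl fun i _ => ?_
              rw [mul_pow, Real.sq_sqrt (he0 i)]
    have h5 : Real.sqrt (∑ i, e i * ‖u i‖ ^ 2) ≤ Real.sqrt (‖H‖ * en x ^ 2) :=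
      Real.sqrt_le_sqrt (quad_bound C e x)
    have h6 : Real.sqrt (∑ i, e i * ‖v i‖ ^ 2) ≤ Real.sqrt (‖H‖ * en y ^ 2) :=
      Real.sqrt_le_sqrt (quad_bound C e y)
    have h7 : Real.sqrt (‖H‖ * en x ^ 2) * Real.sqrt (‖H‖ * en y ^ 2)
        = ‖H‖ * en x * en y := by
      rw [Real.sqrt_mul (norm_nonneg H), Real.sqrt_mul (norm_nonneg H),
        Real.sqrt_sq (en_nonneg x), Real.sqrt_sq (en_nonneg y)]
      rw [show Real.sqrt ‖H‖ * en x * (Real.sqrt ‖H‖ * en y)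
        = (Real.sqrt ‖H‖ * Real.sqrt ‖H‖) * en x * en y by ring,
        Real.mul_self_sqrt (norm_nonneg H)]
    have h45 : ∑ i, e i * (‖u i‖ * ‖v i‖) ≤ ‖H‖ * en x * en y := by
      refine h4.trans ?_
      rw [← h7]
      exact mul_le_mul h5 h6 (Real.sqrt_nonneg _) (Real.sqrt_nonneg _)
    calc en x ^ 2 ≤ ‖star x ⬝ᵥ x‖ := h1
      _ = ‖∑ i, conj (u i) * (d i * v i)‖ := by rw [h2]
      _ ≤ ∑ i, e i * (‖u i‖ * ‖v i‖) := h3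
      _ ≤ ‖H‖ * en x * en y := h45
  rcases eq_or_lt_of_le (en_nonneg x) with h0 | h0
  · rw [← h0]
    exact mul_nonneg (norm_nonneg _) (en_nonneg _)
  · rw [pow_two] at main
    have := le_of_mul_le_mul_right
      (by linarith [main] : en x * en x ≤ (‖H‖ * en y) * en x) h0
    linarith

lemma hnorm_ri (r s : ℝ) : ‖(r : ℂ) + (s : ℂ) * Complex.I‖ ^ 2 = r ^ 2 + s ^ 2 := by
  rw [← Complex.normSq_eq_norm_sq, Complex.normSq_apply]
  simp
  ring

/-- complexification preserves the L2 operator norm -/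
lemma stmt10_norm_map_eq {p q : ℕ} (M : Matrix (Fin p) (Fin q) ℝ) :
    ‖M.map (fun x : ℝ => (x : ℂ))‖ = ‖M‖ := by
  set Mc := M.map (fun x : ℝ => (x : ℂ)) with hMc
  have hmc : ∀ (x : Fin q → ℂ) i, (Mc *ᵥ x) i
      = ((M *ᵥ fun j => (x j).re) i : ℝ) + ((M *ᵥ fun j => (x j).im) i : ℝ) * Complex.I := by
    intro x i
    simp only [mulVec, dotProduct, hMc, map_apply]
    rw [Complex.ext_iff]
    constructor <;>
      simp [Complex.re_sum, Complex.im_sum, Complex.mul_re, Complex.mul_im]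
  refine le_antisymm ?_ ?_
  · refine opNorm_le' _ (norm_nonneg M) fun x => ?_
    set a : Fin q → ℝ := fun j => (x j).re with ha
    set b : Fin q → ℝ := fun j => (x j).im with hb
    have hsq : en (Mc *ᵥ x) ^ 2 ≤ (‖M‖ * en x) ^ 2 := by
      have e1 : en (Mc *ᵥ x) ^ 2 = en (M *ᵥ a) ^ 2 + en (M *ᵥ b) ^ 2 := by
        rw [en_sq, en_sq, en_sq, ← Finset.sum_add_distrib]
        refine Finset.sum_congr rfl fun i _ => ?_
        rw [hmc x i, hnorm_ri]
        simp [Real.norm_eq_abs, sq_abs, ha, hb]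
      have e2 : en x ^ 2 = en a ^ 2 + en b ^ 2 := by
        rw [en_sq, en_sq, en_sq, ← Finset.sum_add_distrib]
        refine Finset.sum_congr rfl fun j _ => ?_
        rw [← Complex.re_add_im (x j), hnorm_ri]
        simp [Real.norm_eq_abs, sq_abs, ha, hb]
      have b1 : en (M *ᵥ a) ^ 2 ≤ (‖M‖ * en a) ^ 2 :=
        pow_le_pow_left₀ (en_nonneg _) (en_mulVec_le M a) 2
      have b2 : en (M *ᵥ b) ^ 2 ≤ (‖M‖ * en b) ^ 2 :=
        pow_le_pow_left₀ (en_nonneg _) (en_mulVec_le M b) 2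
      rw [e1]
      calc en (M *ᵥ a) ^ 2 + en (M *ᵥ b) ^ 2 ≤ (‖M‖ * en a) ^ 2 + (‖M‖ * en b) ^ 2 :=
            add_le_add b1 b2
        _ = ‖M‖ ^ 2 * (en a ^ 2 + en b ^ 2) := by ring
        _ = (‖M‖ * en x) ^ 2 := by rw [← e2]; ring
    have := Real.sqrt_le_sqrt hsq
    rwa [Real.sqrt_sq (en_nonneg _),
      Real.sqrt_sq (mul_nonneg (norm_nonneg _) (en_nonneg _))] at this
  · refine opNorm_le' _ (norm_nonneg Mc) fun a => ?_
    have hre : (fun j => ((a j : ℂ) : ℂ).re) = a := by funext j; simp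
    have him : (M *ᵥ fun j => ((a j : ℂ)).im) = 0 := by
      have : (fun j => ((a j : ℂ)).im) = (0 : Fin q → ℝ) := by funext j; simp
      rw [this, mulVec_zero]
    have h1 : en (M *ᵥ a) = en (Mc *ᵥ fun j => ((a j : ℂ))) := by
      rw [en_eq, en_eq]
      congr 1
      refine Finset.sum_congr rfl fun i _ => ?_
      rw [hmc, hre]
      rw [show ((M *ᵥ fun j => ((a j : ℂ)).im) i : ℝ) = ((0:ℝ) : ℝ) by rw [him]; rfl]
      rw [hnorm_ri]
      simp [Real.norm_eq_abs, sq_abs]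
    have h2 : en (fun j => ((a j : ℂ))) = en a := by
      rw [en_eq, en_eq]
      congr 1
      refine Finset.sum_congr rfl fun j _ => ?_
      simp [Real.norm_eq_abs]
    rw [h1, ← h2]
    exact en_mulVec_le Mc _

lemma herm_map {p : ℕ} {S : Matrix (Fin p) (Fin p) ℝ} (hS : S.IsHermitian) :
    (S.map (fun x : ℝ => (x : ℂ))).IsHermitian := by
  ext i j
  have h := congrFun (congrFun hS i) j
  simp only [conjTranspose_apply, map_apply, Complex.star_def, Complex.conj_ofReal]
  rw [show S j i = Sᴴ i j from rfl, h]

lemma eig_pos_map {p : ℕ} {S : Matrix (Fin p) (Fin p) ℝ} (hS : S.PosDef)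
    (hherm : (S.map (fun x : ℝ => (x : ℂ))).IsHermitian) (i : Fin p) :
    0 < hherm.eigenvalues i := by
  set f : ℝ → ℂ := fun x => (x : ℂ)
  set Q := (CFC.sqrt S).map f with hQ
  have hQherm : Q.IsHermitian := herm_map (CFC.sqrt_nonneg S).posSemidef.1
  have hfact : S.map f = Qᴴ * Q := by
    rw [hQherm]
    have hsq : CFC.sqrt S * CFC.sqrt S = S := CFC.sqrt_mul_sqrt_self S hS.posSemidef.nonneg
    rw [hQ, show f = ⇑Complex.ofRealHom from rfl, ← Matrix.map_mul, hsq]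
  have hpsd : (S.map f).PosSemidef := by
    rw [hfact]; exact posSemidef_conjTranspose_mul_self Q
  have hnonneg : 0 ≤ hherm.eigenvalues i := hpsd.eigenvalues_nonneg i
  rcases lt_or_eq_of_le hnonneg with h | h
  · exact h
  · exfalso
    have hdet : (S.map f).det = (S.det : ℂ) :=
      (RingHom.map_det Complex.ofRealHom S).symm
    have hdetne : (S.map f).det ≠ 0 := by
      rw [hdet]
      exact_mod_cast hS.det_pos.ne'
    rw [hherm.det_eq_prod_eigenvalues] at hdetne
    apply hdetne
    apply Finset.prod_eq_zero (Finset.mem_univ i)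
    rw [← h]
    norm_num

end Stmt10Aux

/-- The H∞-norm of a state-space symmetric system is attained at frequency zero:
for symmetric negative definite `A`, `sup_ω ‖Bᵀ(jωI − A)⁻¹B‖₂ = ‖Bᵀ(−A)⁻¹B‖₂`. -/
theorem stmt_10 {n m : ℕ} (A : Matrix (Fin n) (Fin n) ℝ) (B : Matrix (Fin n) (Fin m) ℝ)
    (hA : A.IsSymm) (hAneg : (-A).PosDef) :
    IsGreatest {r : ℝ | ∃ ω : ℝ, r =
        ‖(B.map (fun x : ℝ => (x : ℂ)))ᵀ *
          (((ω : ℂ) * Complex.I) • (1 : Matrix (Fin n) (Fin n) ℂ) -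
            A.map (fun x : ℝ => (x : ℂ)))⁻¹ * B.map (fun x : ℝ => (x : ℂ))‖}
      ‖Bᵀ * (-A)⁻¹ * B‖ := by
  classical
  have hS : (-A).PosDef := hAneg
  set f : ℝ → ℂ := fun x : ℝ => (x : ℂ) with hf
  set Sc := (-A).map f with hScdef
  have hherm : Sc.IsHermitian := herm_map hS.isHermitian
  set μ := hherm.eigenvalues with hμdef
  have hμ : ∀ i, 0 < μ i := fun i => eig_pos_map hS hherm i
  set V : Matrix (Fin n) (Fin n) ℂ := (hherm.eigenvectorUnitary : Matrix (Fin n) (Fin n) ℂ)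
    with hVdef
  have hVV : V * Vᴴ = 1 := by
    have h := (Matrix.mem_unitaryGroup_iff).mp (hherm.eigenvectorUnitary).2
    simpa [Matrix.star_eq_conjTranspose] using h
  have hV'V : Vᴴ * V = 1 := by
    have h := (Matrix.mem_unitaryGroup_iff').mp (hherm.eigenvectorUnitary).2
    simpa [Matrix.star_eq_conjTranspose] using h
  have hspec : Sc = V * diagonal (fun i => (μ i : ℂ)) * Vᴴ := by
    have h := hherm.spectral_theorem
    exact h
  set Bc := B.map f with hBc
  set C := Vᴴ * Bc with hC
  have hBcT : Bcᵀ = Bcᴴ := by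
    ext i j
    simp [hBc, hf, conjTranspose_apply, map_apply, Complex.conj_ofReal]
  have hCH : Cᴴ = Bcᵀ * V := by
    rw [hC, conjTranspose_mul, conjTranspose_conjTranspose, hBcT]
  have hAc : A.map f = -Sc := by
    ext i j
    simp [hScdef, hf, map_apply]
  have hne : ∀ (ω : ℝ) i, ((ω : ℂ) * Complex.I + (μ i : ℂ)) ≠ 0 := by
    intro ω i h
    have h2 := congrArg Complex.re h
    simp [Complex.add_re, Complex.mul_re] at h2
    exact (hμ i).ne' h2
  have hsand : ∀ D E : Matrix (Fin n) (Fin n) ℂ,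
      (V * D * Vᴴ) * (V * E * Vᴴ) = V * (D * E) * Vᴴ := by
    intro D E
    calc (V * D * Vᴴ) * (V * E * Vᴴ) = V * (D * ((Vᴴ * V) * (E * Vᴴ))) := by
          simp only [Matrix.mul_assoc]
      _ = V * (D * (E * Vᴴ)) := by rw [hV'V, Matrix.one_mul]
      _ = V * (D * E) * Vᴴ := by simp only [Matrix.mul_assoc]
  have main_eq : ∀ ω : ℝ,
      Bcᵀ * (((ω : ℂ) * Complex.I) • (1 : Matrix (Fin n) (Fin n) ℂ) - A.map f)⁻¹ * Bc
        = Cᴴ * diagonal (fun i => ((ω : ℂ) * Complex.I + (μ i : ℂ))⁻¹) * C := by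
    intro ω
    have hM : ((ω : ℂ) * Complex.I) • (1 : Matrix (Fin n) (Fin n) ℂ) - A.map f
        = V * diagonal (fun i => (ω : ℂ) * Complex.I + (μ i : ℂ)) * Vᴴ := by
      rw [hAc, sub_neg_eq_add, hspec]
      have hdiag : diagonal (fun i => (ω : ℂ) * Complex.I + (μ i : ℂ))
          = ((ω : ℂ) * Complex.I) • (1 : Matrix (Fin n) (Fin n) ℂ)
            + diagonal (fun i => (μ i : ℂ)) := by
        rw [Matrix.smul_one_eq_diagonal, diagonal_add]
      rw [hdiag, Matrix.mul_add, Matrix.add_mul]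
      congr 1
      rw [mul_smul_comm, smul_mul_assoc, Matrix.mul_one, hVV]
    have hinv : (((ω : ℂ) * Complex.I) • (1 : Matrix (Fin n) (Fin n) ℂ) - A.map f)⁻¹
        = V * diagonal (fun i => ((ω : ℂ) * Complex.I + (μ i : ℂ))⁻¹) * Vᴴ := by
      apply inv_eq_right_inv
      rw [hM, hsand, diagonal_mul_diagonal]
      have hone : (fun i => ((ω : ℂ) * Complex.I + (μ i : ℂ))
          * ((ω : ℂ) * Complex.I + (μ i : ℂ))⁻¹) = fun _ => (1 : ℂ) :=
        funext fun i => mul_inv_cancel₀ (hne ω i)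
      rw [hone, diagonal_one, Matrix.mul_one, hVV]
    rw [hinv, hCH, hC]
    simp only [Matrix.mul_assoc]
  have hval : ∀ ω : ℝ, ‖Cᴴ * diagonal (fun i => ((ω : ℂ) * Complex.I + (μ i : ℂ))⁻¹) * C‖
      ≤ ‖Cᴴ * diagonal (fun i => (((μ i)⁻¹ : ℝ) : ℂ)) * C‖ := by
    intro ω
    apply key_le
    intro i
    rw [norm_inv]
    have h1 : μ i ≤ ‖(ω : ℂ) * Complex.I + (μ i : ℂ)‖ := by
      have h2 := Complex.abs_re_le_norm ((ω : ℂ) * Complex.I + (μ i : ℂ))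
      refine le_trans ?_ h2
      simp [Complex.add_re, Complex.mul_re]
      exact le_abs_self _
    exact inv_anti₀ (hμ i) h1
  have h0eq : (fun i => (((0 : ℝ) : ℂ) * Complex.I + (μ i : ℂ))⁻¹)
      = fun i => (((μ i)⁻¹ : ℝ) : ℂ) := by
    funext i
    push_cast
    simp
  have hScinv : Sc⁻¹ = (-A)⁻¹.map f := by
    apply inv_eq_right_inv
    rw [hScdef, show f = ⇑Complex.ofRealHom from rfl, ← Matrix.map_mul,
      Matrix.mul_nonsing_inv (-A) (isUnit_iff_ne_zero.mpr hS.det_pos.ne')]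
    exact Matrix.map_one _ (map_zero _) (map_one _)
  have hexpr0 : Bcᵀ * ((((0 : ℝ) : ℂ) * Complex.I) • (1 : Matrix (Fin n) (Fin n) ℂ)
        - A.map f)⁻¹ * Bc = (Bᵀ * (-A)⁻¹ * B).map f := by
    have hz : ((((0 : ℝ) : ℂ)) * Complex.I) • (1 : Matrix (Fin n) (Fin n) ℂ) - A.map f
        = Sc := by
      rw [hAc]
      simp
    rw [hz, hScinv, hBc, show f = ⇑Complex.ofRealHom from rfl, ← Matrix.transpose_map,
      ← Matrix.map_mul, ← Matrix.map_mul]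
  have hnm := stmt10_norm_map_eq (Bᵀ * (-A)⁻¹ * B)
  have hrhs : ‖Bᵀ * (-A)⁻¹ * B‖
      = ‖Cᴴ * diagonal (fun i => (((μ i)⁻¹ : ℝ) : ℂ)) * C‖ := by
    rw [← hnm, ← hexpr0, main_eq 0, h0eq]
  constructor
  · exact ⟨0, by rw [hexpr0, hnm]⟩
  · rintro r ⟨ω, rfl⟩
    rw [main_eq ω, hrhs]
    exact hval ω
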